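/- On the set S of real symmetric n×n matrices X with Tr X = 0 and Tr X² = 1 (a sphere), a matrix X is a critical point of f(X) = (1/3)Tr X³ restricted to S if and only if X has exactly two distinct eigenvalues, namely μ₁ = -√((n-m)/(nm)) with multiplicity m and μ₂ = √(m/(n(n-m))) with multiplicity n-m, for some 1 ≤ m ≤ n-1. -/

import Mathlib

open Matrix

private lemma trace_transpose_mul_self_eq_zero' {n : ℕ} {A : Matrix (Fin n) (Fin n) ℝ}
    (h : (Aᵀ * A).trace = 0) : A = 0 := by
  have h' : ∑ i, ∑ k, A k i * A k i = 0 := by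
    simpa [Matrix.trace, Matrix.diag, Matrix.mul_apply] using h
  ext i j
  have h1 := (Finset.sum_eq_zero_iff_of_nonneg
    (fun k _ => Finset.sum_nonneg fun l _ => mul_self_nonneg _)).mp h' j (Finset.mem_univ j)
  have h2 := (Finset.sum_eq_zero_iff_of_nonneg
    (fun l _ => mul_self_nonneg _)).mp h1 i (Finset.mem_univ i)
  simpa using mul_self_eq_zero.mp h2

private lemma backward_dir {n : ℕ} (X : Matrix (Fin n) (Fin n) ℝ)
    (m : ℕ) (P : Matrix (Fin n) (Fin n) ℝ) (hP : Pᵀ * P = 1)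
    (μ₁ μ₂ : ℝ)
    (hX : X = P * Matrix.diagonal (fun i : Fin n => if (i : ℕ) < m then μ₁ else μ₂) * Pᵀ) :
    ∀ V : Matrix (Fin n) (Fin n) ℝ, Vᵀ = V → V.trace = 0 → (X * V).trace = 0 →
        (X * X * V).trace = 0 := by
  intro V _ hV1 hV2
  set d : Fin n → ℝ := fun i => if (i : ℕ) < m then μ₁ else μ₂ with hd
  have hPPt : P * Pᵀ = 1 := mul_eq_one_comm.mp hP
  have hDD : Matrix.diagonal d * Matrix.diagonal d
      = (μ₁ + μ₂) • Matrix.diagonal d + (-(μ₁ * μ₂)) • 1 := by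
    rw [diagonal_mul_diagonal]
    ext i j
    by_cases h : i = j
    · subst h
      by_cases him : (i : ℕ) < m <;>
        simp [hd, him, Matrix.diagonal_apply_eq, Matrix.one_apply] <;> ring
    · simp [Matrix.diagonal_apply_ne _ h, Matrix.one_apply, h]
  have hXX : X * X = (μ₁ + μ₂) • X + (-(μ₁ * μ₂)) • 1 := by
    rw [hX]
    calc P * Matrix.diagonal d * Pᵀ * (P * Matrix.diagonal d * Pᵀ)
        = P * (Matrix.diagonal d * (Pᵀ * P) * Matrix.diagonal d) * Pᵀ := by
          simp only [Matrix.mul_assoc]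
      _ = P * (Matrix.diagonal d * Matrix.diagonal d) * Pᵀ := by rw [hP]; simp
      _ = (μ₁ + μ₂) • (P * Matrix.diagonal d * Pᵀ) + (-(μ₁ * μ₂)) • 1 := by
          rw [hDD]
          simp only [Matrix.mul_add, Matrix.add_mul, Matrix.mul_smul, Matrix.smul_mul,
            Matrix.mul_one, Matrix.one_mul, Matrix.mul_assoc, hPPt]
  rw [hXX]
  simp only [Matrix.add_mul, Matrix.smul_mul, Matrix.one_mul, Matrix.trace_add,
    Matrix.trace_smul, hV1, hV2, smul_eq_mul, mul_zero, add_zero, zero_add]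

private lemma eigen_comb (n : ℕ) (hn : 0 < n) (t : ℝ) (f : Fin n → ℝ)
    (hquadf : ∀ i, f i * f i = t * f i + (n:ℝ)⁻¹)
    (htrf : ∑ i, f i = 0) (htrf2 : ∑ i, f i * f i = 1) :
    ∃ m : ℕ, 1 ≤ m ∧ m ≤ n - 1 ∧ ∃ σ : Equiv.Perm (Fin n),
      ∀ i : Fin n, f (σ i) = if (i : ℕ) < m then -Real.sqrt (((n : ℝ) - m) / (n * m))
              else Real.sqrt ((m : ℝ) / (n * ((n : ℝ) - m))) := by
  have hnR : (0:ℝ) < n := by positivity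
  have hne : ∀ i, f i ≠ 0 := by
    intro i h
    have := hquadf i
    rw [h] at this
    simp at this
    exact (ne_of_gt hnR) this.symm
  have hpair : ∀ i j, f i ≠ f j → f i * f j = -(n:ℝ)⁻¹ := by
    intro i j hij
    have h1 := hquadf i
    have h2 := hquadf j
    have hsum : f i + f j = t := by
      have hcancel : (f i - f j) * (f i + f j) = (f i - f j) * t := by linear_combination h1 - h2
      exact mul_left_cancel₀ (sub_ne_zero.mpr hij) hcancel
    linear_combination f i * hsum - h1
  have hexneg : ∃ i, f i < 0 := by
    by_contra h
    push_neg at h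
    have hall : ∀ i ∈ Finset.univ, f i = 0 :=
      (Finset.sum_eq_zero_iff_of_nonneg (fun i _ => h i)).mp htrf
    have : ∑ i, f i * f i = 0 := Finset.sum_eq_zero fun i hi => by rw [hall i hi]; ring
    rw [htrf2] at this; exact one_ne_zero this
  have hexpos : ∃ j, 0 < f j := by
    by_contra h
    push_neg at h
    have htrf' : ∑ i, (-f i) = 0 := by rw [Finset.sum_neg_distrib, htrf, neg_zero]
    have hall : ∀ i ∈ Finset.univ, -f i = 0 :=
      (Finset.sum_eq_zero_iff_of_nonneg (fun i _ => neg_nonneg.mpr (h i))).mp htrf'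
    have : ∑ i, f i * f i = 0 := Finset.sum_eq_zero fun i hi => by
      have := hall i hi; have : f i = 0 := by linarith
      rw [this]; ring
    rw [htrf2] at this; exact one_ne_zero this
  obtain ⟨i₀, hi₀⟩ := hexneg
  obtain ⟨j₀, hj₀⟩ := hexpos
  set μ₁ := f i₀ with hμ₁def
  set μ₂ := f j₀ with hμ₂def
  have hμlt : μ₁ < μ₂ := lt_trans hi₀ hj₀
  have hval : ∀ i, f i = μ₁ ∨ f i = μ₂ := by
    intro i
    by_contra h
    push_neg at h
    obtain ⟨h1, h2⟩ := h
    have e1 : f i * μ₁ = -(n:ℝ)⁻¹ := hpair i i₀ h1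
    have e2 : f i * μ₂ = -(n:ℝ)⁻¹ := hpair i j₀ h2
    have : f i * (μ₁ - μ₂) = 0 := by rw [mul_sub, e1, e2]; ring
    rcases mul_eq_zero.mp this with h | h
    · exact hne i h
    · exact (ne_of_lt hμlt) (sub_eq_zero.mp h)
  -- sort
  set σ := Tuple.sort f with hσ
  set g : Fin n → ℝ := f ∘ σ with hg
  have hmono : Monotone g := Tuple.monotone_sort f
  set s : Finset (Fin n) := Finset.univ.filter (fun i => g i = μ₁) with hs
  set m := s.card with hm
  have hdown : ∀ i j : Fin n, i ≤ j → g j = μ₁ → g i = μ₁ := by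
    intro i j hij hj
    rcases hval (σ i) with h | h
    · exact h
    · exfalso
      have := hmono hij
      rw [hj] at this
      have : μ₂ ≤ μ₁ := by rw [← h]; exact this
      exact absurd this (not_le.mpr hμlt)
  have hginterval : ∀ i : Fin n, g i = if (i : ℕ) < m then μ₁ else μ₂ := by
    intro i
    split_ifs with h
    · by_contra hgi
      have hsub : s ⊆ Finset.Iio i := by
        intro j hj
        rw [hs, Finset.mem_filter] at hj
        rw [Finset.mem_Iio]
        by_contra hle
        push_neg at hle
        exact hgi (hdown i j hle hj.2)
      have := Finset.card_le_card hsub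
      rw [Fin.card_Iio] at this
      omega
    · rcases hval (σ i) with hgi | hgi
      · exfalso
        have hsub : Finset.Iic i ⊆ s := by
          intro j hj
          rw [Finset.mem_Iic] at hj
          rw [hs, Finset.mem_filter]
          exact ⟨Finset.mem_univ _, hdown j i hj hgi⟩
        have := Finset.card_le_card hsub
        rw [Fin.card_Iic] at this
        omega
      · exact hgi
  have hm1 : 1 ≤ m := by
    have : σ⁻¹ i₀ ∈ s := by
      rw [hs, Finset.mem_filter]
      constructor
      · exact Finset.mem_univ _
      · show f (σ (σ⁻¹ i₀)) = μ₁
        simp [hμ₁def]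
    have := Finset.card_pos.mpr ⟨_, this⟩
    omega
  have hmn : m < n := by
    have hne' : s ≠ Finset.univ := by
      intro h
      have : σ⁻¹ j₀ ∈ s := h ▸ Finset.mem_univ _
      rw [hs, Finset.mem_filter] at this
      have h2 : f (σ (σ⁻¹ j₀)) = μ₁ := this.2
      simp at h2
      have hj₀' : 0 < f j₀ := hj₀
      rw [h2] at hj₀'
      exact absurd hj₀' (not_lt.mpr (le_of_lt hi₀))
    have := (Finset.card_lt_iff_ne_univ _).mpr hne'
    rwa [Fintype.card_fin] at this
  -- sums in terms of m
  have hsumg : ∑ i, g i = 0 := by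
    have := Equiv.sum_comp σ f
    simpa [hg] using this.trans htrf
  have hsumg2 : ∑ i, g i * g i = 1 := by
    have := Equiv.sum_comp σ (fun i => f i * f i)
    simpa [hg] using this.trans htrf2
  have hfiltcard : (Finset.univ.filter (fun i : Fin n => (i : ℕ) < m)).card = m := by
    have : Finset.univ.filter (fun i : Fin n => (i : ℕ) < m) = Finset.Iio (⟨m, hmn⟩ : Fin n) := by
      ext j
      simp [Fin.lt_def]
    rw [this, Fin.card_Iio]
  have hsum1 : (m:ℝ) * μ₁ + ((n:ℝ) - m) * μ₂ = 0 := by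
    calc (m:ℝ) * μ₁ + ((n:ℝ) - m) * μ₂ = ∑ i, g i := by
          rw [Finset.sum_congr rfl (fun i (_ : i ∈ Finset.univ) => hginterval i)]
          rw [Finset.sum_ite, Finset.sum_const, Finset.sum_const, hfiltcard,
            Finset.filter_not, Finset.card_sdiff_of_subset (Finset.filter_subset _ _), hfiltcard,
            Finset.card_univ, Fintype.card_fin, nsmul_eq_mul, nsmul_eq_mul,
            Nat.cast_sub (le_of_lt hmn)]
      _ = 0 := hsumg
  have hgg : ∀ i : Fin n, g i * g i = if (i:ℕ) < m then μ₁ * μ₁ else μ₂ * μ₂ := by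
    intro i
    rw [hginterval i]
    split_ifs <;> ring
  have hsum2 : (m:ℝ) * (μ₁ * μ₁) + ((n:ℝ) - m) * (μ₂ * μ₂) = 1 := by
    calc (m:ℝ) * (μ₁ * μ₁) + ((n:ℝ) - m) * (μ₂ * μ₂) = ∑ i, g i * g i := by
          rw [Finset.sum_congr rfl (fun i (_ : i ∈ Finset.univ) => hgg i)]
          rw [Finset.sum_ite, Finset.sum_const, Finset.sum_const, hfiltcard,
            Finset.filter_not, Finset.card_sdiff_of_subset (Finset.filter_subset _ _), hfiltcard,
            Finset.card_univ, Fintype.card_fin, nsmul_eq_mul, nsmul_eq_mul,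
            Nat.cast_sub (le_of_lt hmn)]
      _ = 1 := hsumg2
  -- arithmetic: determine μ₁ and μ₂
  have hmR : (0:ℝ) < m := by exact_mod_cast hm1
  have hnmR : (0:ℝ) < (n:ℝ) - m := by
    have : (m:ℝ) < n := by exact_mod_cast hmn
    linarith
  have h3 : (((n:ℝ) - m) * μ₂) * (((n:ℝ) - m) * μ₂) = ((m:ℝ) * μ₁) * ((m:ℝ) * μ₁) := by
    have h2 : ((n:ℝ) - m) * μ₂ = -((m:ℝ) * μ₁) := by linarith
    rw [h2]; ring
  have key1 : (m:ℝ) * n * (μ₁ * μ₁) = (n:ℝ) - m := by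
    linear_combination ((n:ℝ) - m) * hsum2 - h3
  have key2 : (n:ℝ) * ((n:ℝ) - m) * (μ₂ * μ₂) = m := by
    linear_combination (m:ℝ) * hsum2 + h3
  have hμ₁ : μ₁ = -Real.sqrt (((n : ℝ) - m) / (n * m)) := by
    have heq : ((n:ℝ) - m) / (n * m) = μ₁ ^ 2 := by
      field_simp
      nlinarith [key1]
    rw [heq, Real.sqrt_sq_eq_abs, abs_of_neg hi₀, neg_neg]
  have hμ₂ : μ₂ = Real.sqrt ((m : ℝ) / (n * ((n : ℝ) - m))) := by
    have heq : (m:ℝ) / (n * ((n:ℝ) - m)) = μ₂ ^ 2 := by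
      field_simp
      nlinarith [key2]
    rw [heq, Real.sqrt_sq_eq_abs, abs_of_pos hj₀]
  refine ⟨m, hm1, Nat.le_sub_one_of_lt hmn, σ, fun i => ?_⟩
  have := hginterval i
  rw [hμ₁, hμ₂] at this
  exact this

private lemma perm_assemble {n : ℕ} (X U : Matrix (Fin n) (Fin n) ℝ) (f : Fin n → ℝ)
    (hspec : X = U * Matrix.diagonal f * Uᵀ) (hUtU : Uᵀ * U = 1)
    (σ : Equiv.Perm (Fin n)) (d : Fin n → ℝ) (hd : ∀ i, f (σ i) = d i) :
    ∃ P : Matrix (Fin n) (Fin n) ℝ, Pᵀ * P = 1 ∧ X = P * Matrix.diagonal d * Pᵀ := by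
  refine ⟨U.submatrix id σ, ?_, ?_⟩
  · rw [Matrix.transpose_submatrix]
    have := Matrix.submatrix_mul_equiv Uᵀ U σ (Equiv.refl (Fin n)) σ
    simp only [Equiv.coe_refl] at this
    rw [this, hUtU, Matrix.submatrix_one_equiv]
  · have hdiag : Matrix.diagonal d = (Matrix.diagonal f).submatrix σ σ := by
      rw [Matrix.submatrix_diagonal_equiv]
      exact congrArg Matrix.diagonal (funext fun i => (hd i).symm)
    rw [hdiag, Matrix.transpose_submatrix]
    have h1 := Matrix.submatrix_mul_equiv U (Matrix.diagonal f) id σ σ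
    have h2 := Matrix.submatrix_mul_equiv (U * Matrix.diagonal f) Uᵀ id σ id
    rw [Matrix.mul_assoc, ← Matrix.submatrix_id_id (X), hspec, ← h2, ← h1, Matrix.mul_assoc]

/-- On the sphere `S = {X symmetric : Tr X = 0, Tr X² = 1}` (inner product
`(X, Y) = Tr (X Y)`), a matrix `X` is a critical point of `f = (1/3) Tr X³` restricted
to `S` — i.e. the differential of `Tr X³` (with ambient gradient `3X²`) vanishes on the
tangent space `T_X S = {V symmetric : Tr V = 0, Tr (X V) = 0}` — iff `X` has exactly two
distinct eigenvalues `μ₁ = -√((n-m)/(nm))` with multiplicity `m` and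
`μ₂ = √(m/(n(n-m)))` with multiplicity `n-m`, for some `1 ≤ m ≤ n-1`. -/
theorem critical_points_of_trace_cube (n : ℕ)
    (X : Matrix (Fin n) (Fin n) ℝ) (hsymm : Xᵀ = X)
    (htr : X.trace = 0) (htr2 : (X * X).trace = 1) :
    (∀ V : Matrix (Fin n) (Fin n) ℝ, Vᵀ = V → V.trace = 0 → (X * V).trace = 0 →
        (X * X * V).trace = 0) ↔
      ∃ m : ℕ, 1 ≤ m ∧ m ≤ n - 1 ∧
        ∃ P : Matrix (Fin n) (Fin n) ℝ, Pᵀ * P = 1 ∧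
          X = P * Matrix.diagonal (fun i : Fin n =>
              if (i : ℕ) < m then -Real.sqrt (((n : ℝ) - m) / (n * m))
              else Real.sqrt ((m : ℝ) / (n * ((n : ℝ) - m)))) * Pᵀ := by
  constructor
  · intro hcrit
    have hn : 0 < n := by
      rcases Nat.eq_zero_or_pos n with h0 | hn
      · exfalso
        subst h0
        simp [Matrix.trace] at htr2
      · exact hn
    have hquadM : X * X = (X*X*X).trace • X + ((n:ℝ)⁻¹) • 1 := by
      set t := (X*X*X).trace with ht
      set V := X * X - t • X - (n:ℝ)⁻¹ • 1 with hV
      have hVsymm : Vᵀ = V := by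
        rw [hV]
        simp [Matrix.transpose_sub, Matrix.transpose_smul, Matrix.transpose_mul, hsymm]
      have htrV : V.trace = 0 := by
        rw [hV]
        simp [Matrix.trace_sub, Matrix.trace_smul, htr, htr2, Matrix.trace_one,
          inv_mul_cancel₀ (show (n:ℝ) ≠ 0 by positivity)]
      have htrXV : (X * V).trace = 0 := by
        have : X * V = X * (X * X) - t • (X * X) - (n:ℝ)⁻¹ • X := by
          rw [hV]; simp [Matrix.mul_sub, Matrix.mul_smul]
        rw [this]
        simp [Matrix.trace_sub, Matrix.trace_smul, htr, htr2, ← Matrix.mul_assoc, ← ht]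
      have hXXV := hcrit V hVsymm htrV htrXV
      have htrVV : (Vᵀ * V).trace = 0 := by
        rw [hVsymm]
        have : V * V = (X * X) * V - t • (X * V) - (n:ℝ)⁻¹ • V := by
          rw (occs := .pos [1]) [hV]
          simp [Matrix.sub_mul, Matrix.smul_mul]
        rw [this]
        simp [Matrix.trace_sub, Matrix.trace_smul, hXXV, htrXV, htrV]
      have hV0 : V = 0 := trace_transpose_mul_self_eq_zero' htrVV
      rw [hV, sub_sub] at hV0
      exact sub_eq_zero.mp hV0
    set t := (X*X*X).trace with ht
    have hherm : X.IsHermitian := by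
      rw [Matrix.IsHermitian, Matrix.conjTranspose_eq_transpose_of_trivial, hsymm]
    set U : Matrix (Fin n) (Fin n) ℝ := (hherm.eigenvectorUnitary : Matrix (Fin n) (Fin n) ℝ) with hU
    set f : Fin n → ℝ := hherm.eigenvalues with hf
    have hspec : X = U * Matrix.diagonal f * Uᵀ := by
      have := hherm.spectral_theorem
      rwa [Unitary.conjStarAlgAut_apply, Matrix.star_eq_conjTranspose,
        Matrix.conjTranspose_eq_transpose_of_trivial] at this
    have hUtU : Uᵀ * U = 1 := by
      have := Matrix.mem_unitaryGroup_iff'.mp hherm.eigenvectorUnitary.2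
      rwa [Matrix.star_eq_conjTranspose, Matrix.conjTranspose_eq_transpose_of_trivial] at this
    have hUUt : U * Uᵀ = 1 := mul_eq_one_comm.mp hUtU
    have hconj : Uᵀ * X * U = Matrix.diagonal f := by
      rw [hspec]
      calc Uᵀ * (U * Matrix.diagonal f * Uᵀ) * U
          = (Uᵀ * U) * Matrix.diagonal f * (Uᵀ * U) := by simp only [Matrix.mul_assoc]
        _ = Matrix.diagonal f := by rw [hUtU]; simp
    have hDD : Matrix.diagonal f * Matrix.diagonal f = t • Matrix.diagonal f + ((n:ℝ)⁻¹) • 1 := by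
      have h1 : Uᵀ * (X * X) * U = Matrix.diagonal f * Matrix.diagonal f := by
        calc Uᵀ * (X * X) * U = (Uᵀ * X * U) * (Uᵀ * X * U) := by
              rw [show (Uᵀ * X * U) * (Uᵀ * X * U) = Uᵀ * X * (U * Uᵀ) * X * U by
                simp only [Matrix.mul_assoc], hUUt, Matrix.mul_one]
              simp only [Matrix.mul_assoc]
          _ = Matrix.diagonal f * Matrix.diagonal f := by rw [hconj]
      have h2 : Uᵀ * (t • X + ((n:ℝ)⁻¹) • 1) * U = t • Matrix.diagonal f + ((n:ℝ)⁻¹) • 1 := by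
        simp only [Matrix.mul_add, Matrix.add_mul, Matrix.mul_smul, Matrix.smul_mul,
          Matrix.mul_one, hconj, hUtU]
      rw [← h1, hquadM, h2]
    have hquadf : ∀ i, f i * f i = t * f i + (n:ℝ)⁻¹ := by
      intro i
      have := congrFun (congrFun hDD i) i
      simpa [Matrix.diagonal_mul_diagonal, Matrix.diagonal_apply_eq, Matrix.add_apply,
        Matrix.smul_apply, Matrix.one_apply_eq, smul_eq_mul] using this
    have htrf : ∑ i, f i = 0 := by
      have : X.trace = ∑ i, f i := by
        rw [hspec, Matrix.trace_mul_comm (U * Matrix.diagonal f) Uᵀ, ← Matrix.mul_assoc,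
          hUtU, Matrix.one_mul, Matrix.trace_diagonal]
      rw [← this, htr]
    have htrf2 : ∑ i, f i * f i = 1 := by
      have h : ∑ i, f i * f i = ∑ i : Fin n, (t * f i + (n:ℝ)⁻¹) :=
        Finset.sum_congr rfl (fun i _ => hquadf i)
      rw [h, Finset.sum_add_distrib, ← Finset.mul_sum, htrf, Finset.sum_const, Finset.card_univ,
        Fintype.card_fin, nsmul_eq_mul, mul_inv_cancel₀ (show (n:ℝ) ≠ 0 by positivity), mul_zero,
        zero_add]
    obtain ⟨m, hm1, hm2, σ, hσval⟩ := eigen_comb n hn t f hquadf htrf htrf2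
    obtain ⟨P, hP1, hP2⟩ := perm_assemble X U f hspec hUtU σ _ hσval
    exact ⟨m, hm1, hm2, P, hP1, hP2⟩
  · rintro ⟨m, _, _, P, hP, hX⟩
    exact backward_dir X m P hP _ _ hX
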